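/- Let p ≥ 3 be a prime number and G a group of order p^5 generated by elements f1, f2, f3, f4, f5 satisfying: (i) f4^p = f5^p = 1 and f5 ∈ Z(G); (ii) [f2,f1] = f3, [f3,f1] = f4, [f4,f1] = [f3,f2] = f5, [f4,f2] = [f4,f3] = 1; (iii) the subgroup ⟨f4, f5⟩ is isomorphic to C_p × C_p, and the quotient G/⟨f4, f5⟩ is a non-abelian group of order p^3 and exponent p. Then B_0(G) ≠ 0. -/

import Mathlib

/-- The coefficient group `ℚ/ℤ`. -/
abbrev QZ : Type := ℚ ⧸ AddSubgroup.zmultiples (1 : ℚ)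

/-- A (inhomogeneous) 2-cocycle on `G` with values in `ℚ/ℤ` (trivial action). -/
def IsGrpCocycle {G : Type*} [Group G] (f : G → G → QZ) : Prop :=
  ∀ g h k : G, f g h + f (g * h) k = f h k + f g (h * k)

/-- A 2-coboundary on `G` with values in `ℚ/ℤ` (trivial action). -/
def IsGrpCoboundary {G : Type*} [Group G] (f : G → G → QZ) : Prop :=
  ∃ c : G → QZ, ∀ g h : G, f g h = c g + c h - c (g * h)

/-- The additive group of 2-cocycles. -/
def cocycles2 (G : Type*) [Group G] : AddSubgroup (G → G → QZ) where
  carrier := {f | IsGrpCocycle f}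
  zero_mem' := by intro g h k; simp
  add_mem' := by
    intro a b ha hb g h k
    simp only [Pi.add_apply]
    rw [add_add_add_comm, ha g h k, hb g h k, add_add_add_comm]
  neg_mem' := by
    intro a ha g h k
    simp only [Pi.neg_apply, ← neg_add]
    rw [ha g h k]

/-- The subgroup of 2-coboundaries inside the group of 2-cocycles. -/
def coboundaries2 (G : Type*) [Group G] : AddSubgroup (cocycles2 G) where
  carrier := {f | IsGrpCoboundary (f : G → G → QZ)}
  zero_mem' := ⟨0, by intro g h; simp⟩
  add_mem' := by
    rintro a b ⟨c, hc⟩ ⟨d, hd⟩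
    refine ⟨c + d, fun g h => ?_⟩
    have : ((a + b : cocycles2 G) : G → G → QZ) g h
        = (a : G → G → QZ) g h + (b : G → G → QZ) g h := rfl
    rw [this, hc g h, hd g h]
    simp only [Pi.add_apply]
    abel
  neg_mem' := by
    rintro a ⟨c, hc⟩
    refine ⟨-c, fun g h => ?_⟩
    have : ((-a : cocycles2 G) : G → G → QZ) g h = -((a : G → G → QZ) g h) := rfl
    rw [this, hc g h]
    simp only [Pi.neg_apply]
    abel

/-- The second cohomology group `H²(G, ℚ/ℤ)` (trivial action), as cocycles mod coboundaries. -/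
abbrev H2 (G : Type*) [Group G] : Type _ := cocycles2 G ⧸ coboundaries2 G

/-- A group is bicyclic if it is cyclic or the direct product of two cyclic groups. -/
def IsBicyclic (A : Type*) [Group A] : Prop :=
  IsCyclic A ∨ ∃ B C : Subgroup A, IsCyclic B ∧ IsCyclic C ∧ Nonempty (A ≃* B × C)

/-- The restriction of `f` to every bicyclic subgroup is a coboundary. -/
def RestrictsToCoboundaries {G : Type*} [Group G] (f : G → G → QZ) : Prop :=
  ∀ A : Subgroup G, IsBicyclic A → IsGrpCoboundary (fun a b : A => f a b)

/-- The Bogomolov multiplier `B₀(G)`: the subgroup of `H²(G, ℚ/ℤ)` consisting of the classes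
whose restriction to every bicyclic subgroup of `G` vanishes. -/
def B0 (G : Type*) [Group G] : AddSubgroup (H2 G) where
  carrier := {x | ∃ f : cocycles2 G,
    (QuotientAddGroup.mk f : H2 G) = x ∧ RestrictsToCoboundaries (f : G → G → QZ)}
  zero_mem' := by
    refine ⟨0, rfl, fun A _ => ⟨0, fun a b => ?_⟩⟩
    simp
  add_mem' := by
    rintro x y ⟨f, rfl, hf⟩ ⟨g, rfl, hg⟩
    refine ⟨f + g, rfl, fun A hA => ?_⟩
    obtain ⟨c, hc⟩ := hf A hA
    obtain ⟨d, hd⟩ := hg A hA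
    refine ⟨c + d, fun a b => ?_⟩
    have hc' : (f : G → G → QZ) (a : G) (b : G) = c a + c b - c (a * b) := hc a b
    have hd' : (g : G → G → QZ) (a : G) (b : G) = d a + d b - d (a * b) := hd a b
    show ((f + g : cocycles2 G) : G → G → QZ) (a : G) (b : G)
        = (c + d) a + (c + d) b - (c + d) (a * b)
    have : ((f + g : cocycles2 G) : G → G → QZ) (a : G) (b : G)
        = (f : G → G → QZ) (a : G) (b : G) + (g : G → G → QZ) (a : G) (b : G) := rfl
    rw [this, hc', hd']
    simp only [Pi.add_apply]
    abel
  neg_mem' := by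
    rintro x ⟨f, rfl, hf⟩
    refine ⟨-f, rfl, fun A hA => ?_⟩
    obtain ⟨c, hc⟩ := hf A hA
    refine ⟨-c, fun a b => ?_⟩
    have hc' : (f : G → G → QZ) (a : G) (b : G) = c a + c b - c (a * b) := hc a b
    show ((-f : cocycles2 G) : G → G → QZ) (a : G) (b : G)
        = (-c) a + (-c) b - (-c) (a * b)
    have : ((-f : cocycles2 G) : G → G → QZ) (a : G) (b : G)
        = -((f : G → G → QZ) (a : G) (b : G)) := rfl
    rw [this, hc']
    simp only [Pi.neg_apply]
    abel

set_option linter.unreachableTactic false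
set_option linter.unusedTactic false
set_option maxHeartbeats 1000000

/-- Model Heisenberg group mod p. -/
@[ext] structure T3 (p : ℕ) where
  a : ZMod p
  b : ZMod p
  c : ZMod p

namespace T3

variable {p : ℕ}

instance : Mul (T3 p) := ⟨fun x y => ⟨x.a + y.a, x.b + y.b, x.c + y.c + y.a * x.b⟩⟩
instance : One (T3 p) := ⟨⟨0, 0, 0⟩⟩
instance : Inv (T3 p) := ⟨fun x => ⟨-x.a, -x.b, -x.c + x.a * x.b⟩⟩

@[simp] lemma mul_a (x y : T3 p) : (x * y).a = x.a + y.a := rfl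
@[simp] lemma mul_b (x y : T3 p) : (x * y).b = x.b + y.b := rfl
@[simp] lemma mul_c (x y : T3 p) : (x * y).c = x.c + y.c + y.a * x.b := rfl
@[simp] lemma one_a : (1 : T3 p).a = 0 := rfl
@[simp] lemma one_b : (1 : T3 p).b = 0 := rfl
@[simp] lemma one_c : (1 : T3 p).c = 0 := rfl
@[simp] lemma inv_a (x : T3 p) : (x⁻¹).a = -x.a := rfl
@[simp] lemma inv_b (x : T3 p) : (x⁻¹).b = -x.b := rfl
@[simp] lemma inv_c (x : T3 p) : (x⁻¹).c = -x.c + x.a * x.b := rfl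

instance : Group (T3 p) :=
  Group.ofLeftAxioms
    (by rintro ⟨a, b, c⟩ ⟨a', b', c'⟩ ⟨a'', b'', c''⟩; ext <;> simp <;> ring)
    (by rintro ⟨a, b, c⟩; ext <;> simp)
    (by rintro ⟨a, b, c⟩; ext <;> simp <;> ring)

@[simp] lemma pow_e1 (n : ℕ) : (⟨1, 0, 0⟩ : T3 p) ^ n = ⟨(n : ZMod p), 0, 0⟩ := by
  induction n with
  | zero => ext <;> simp
  | succ n ih => rw [pow_succ, ih]; ext <;> simp

@[simp] lemma pow_e2 (n : ℕ) : (⟨0, 1, 0⟩ : T3 p) ^ n = ⟨0, (n : ZMod p), 0⟩ := by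
  induction n with
  | zero => ext <;> simp
  | succ n ih => rw [pow_succ, ih]; ext <;> simp

@[simp] lemma pow_e3 (n : ℕ) : (⟨0, 0, 1⟩ : T3 p) ^ n = ⟨0, 0, (n : ZMod p)⟩ := by
  induction n with
  | zero => ext <;> simp
  | succ n ih => rw [pow_succ, ih]; ext <;> simp

lemma pow_a (x : T3 p) (n : ℕ) : (x ^ n).a = n * x.a := by
  induction n with
  | zero => simp
  | succ n ih => rw [pow_succ]; push_cast; rw [mul_a, ih]; ring

end T3

/-- The explicit 2-cocycle on the model. -/
def omegaT {p : ℕ} (i2 : ZMod p) (v w : T3 p) : ZMod p :=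
  w.a * (v.b * (v.b - 1) * i2) + v.c * w.b + w.a * v.b * w.b

lemma omegaT_cocycle {p : ℕ} {i2 : ZMod p} (h2 : 2 * i2 = 1) (u v w : T3 p) :
    omegaT i2 u v + omegaT i2 (u * v) w = omegaT i2 v w + omegaT i2 u (v * w) := by
  rcases u with ⟨a, b, c⟩; rcases v with ⟨a', b', c'⟩; rcases w with ⟨a'', b'', c''⟩
  simp only [omegaT, T3.mul_a, T3.mul_b, T3.mul_c]
  linear_combination (a'' * b * b') * h2

@[simp] lemma omegaT_one_right {p : ℕ} (i2 : ZMod p) (v : T3 p) : omegaT i2 v 1 = 0 := by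
  simp [omegaT]

@[simp] lemma omegaT_one_left {p : ℕ} (i2 : ZMod p) (v : T3 p) : omegaT i2 1 v = 0 := by
  simp [omegaT]

/-- Antisymmetrization of a 2-cocycle is biadditive on commuting elements. -/
lemma cocycle_antisym_add {G M : Type*} [Group G] [AddCommGroup M] {F : G → G → M}
    (hF : ∀ g h k, F g h + F (g * h) k = F h k + F g (h * k)) {g h k : G}
    (hgh : g * h = h * g) (hgk : g * k = k * g) :
    F g (h * k) - F (h * k) g = (F g h - F h g) + (F g k - F k g) := by
  have h1 := hF g h k
  have h2 := hF h g k
  have h3 := hF h k g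
  rw [hgh] at h1
  rw [← hgk] at h3
  have e1 : F g (h * k) = F g h + F (h * g) k - F h k := by
    rw [eq_sub_iff_add_eq, add_comm]; exact h1.symm
  have e3 : F (h * k) g = F k g + F h (g * k) - F h k := by
    rw [eq_sub_iff_add_eq, add_comm]; exact h3
  have e2 : F h (g * k) = F h g + F (h * g) k - F g k := by
    rw [eq_sub_iff_add_eq, add_comm]; exact h2.symm
  rw [e1, e3, e2]; abel

lemma symm_cocycle_coboundary {A : Type} [Group A] (hcomm : ∀ x y : A, x * y = y * x)
    (F : A → A → QZ) (hF : ∀ g h k, F g h + F (g * h) k = F h k + F g (h * k))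
    (hsym : ∀ g h, F g h = F h g) :
    ∃ c : A → QZ, ∀ g h, F g h = c g + c h - c (g * h) := by
  -- normalization facts
  have hF1 : ∀ g : A, F 1 g = F 1 1 := by
    intro g
    have := hF 1 1 g
    rw [one_mul, one_mul] at this
    exact (add_right_cancel this).symm
  have hFg1 : ∀ g : A, F g 1 = F 1 1 := by
    intro g
    have := hF g 1 1
    simp only [mul_one] at this
    exact add_right_cancel this
  -- the abelian extension E = A × QZ
  letI instAdd : Add (A × QZ) := ⟨fun x y => (x.1 * y.1, x.2 + y.2 + F x.1 y.1)⟩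
  letI instZero : Zero (A × QZ) := ⟨(1, -F 1 1)⟩
  letI instNeg : Neg (A × QZ) := ⟨fun x => (x.1⁻¹, -F 1 1 - x.2 - F x.1 x.1⁻¹)⟩
  have add_def : ∀ x y : A × QZ, x + y = (x.1 * y.1, x.2 + y.2 + F x.1 y.1) := fun _ _ => rfl
  have zero_def : (0 : A × QZ) = (1, -F 1 1) := rfl
  have neg_def : ∀ x : A × QZ, -x = (x.1⁻¹, -F 1 1 - x.2 - F x.1 x.1⁻¹) := fun _ => rfl
  letI instAG : AddGroup (A × QZ) :=
    AddGroup.ofLeftAxioms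
      (by
        intro x y z
        rw [add_def, add_def, add_def, add_def]
        refine Prod.ext (mul_assoc _ _ _) ?_
        show x.2 + y.2 + F x.1 y.1 + z.2 + F (x.1 * y.1) z.1
            = x.2 + (y.2 + z.2 + F y.1 z.1) + F x.1 (y.1 * z.1)
        have h := hF x.1 y.1 z.1
        have : x.2 + y.2 + F x.1 y.1 + z.2 + F (x.1 * y.1) z.1
            = x.2 + y.2 + z.2 + (F x.1 y.1 + F (x.1 * y.1) z.1) := by abel
        rw [this, h]
        abel)
      (by
        intro x
        rw [zero_def, add_def]
        refine Prod.ext (one_mul _) ?_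
        show -F 1 1 + x.2 + F 1 x.1 = x.2
        rw [hF1 x.1]; abel)
      (by
        intro x
        rw [neg_def, add_def]
        refine Prod.ext (inv_mul_cancel _) ?_
        show -F 1 1 - x.2 - F x.1 x.1⁻¹ + x.2 + F x.1⁻¹ x.1 = -F 1 1
        rw [hsym x.1⁻¹ x.1]; abel)
  letI instACG : AddCommGroup (A × QZ) :=
    { instAG with
      add_comm := by
        intro x y
        rw [add_def, add_def]
        refine Prod.ext (hcomm _ _) ?_
        show x.2 + y.2 + F x.1 y.1 = y.2 + x.2 + F y.1 x.1
        rw [hsym x.1 y.1]; abel }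
  -- divisibility of QZ
  letI : DivisibleBy ℚ ℕ := AddGroup.divisibleByNatOfDivisibleByInt ℚ
  letI : DivisibleBy QZ ℕ := QuotientAddGroup.divisibleBy _
  letI : DivisibleBy QZ ℤ := AddGroup.divisibleByIntOfDivisibleByNat QZ
  haveI : Module.Injective ℤ QZ := (Module.Baer.of_divisible QZ).injective
  -- the inclusion of QZ
  have jadd : ∀ q q' : QZ, ((1 : A), q + q' - F 1 1)
      = (((1 : A), q - F 1 1) + ((1 : A), q' - F 1 1) : A × QZ) := by
    intro q q'
    rw [add_def]
    refine Prod.ext (one_mul _).symm ?_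
    show q + q' - F 1 1 = q - F 1 1 + (q' - F 1 1) + F 1 1
    abel
  let j : QZ →+ (A × QZ) := AddMonoidHom.mk' (fun q => ((1 : A), q - F 1 1)) jadd
  have jinj : Function.Injective j := by
    intro q q' h
    have h2 : q - F 1 1 = q' - F 1 1 := congrArg Prod.snd h
    exact sub_left_inj.mp h2
  obtain ⟨r, hr⟩ := Module.Injective.out j.toIntLinearMap jinj LinearMap.id
  refine ⟨fun x => r (x, 0), fun g h => ?_⟩
  have key : ((g, (0 : QZ)) + (h, (0 : QZ)) : A × QZ)
      = ((g * h, (0 : QZ)) + j.toIntLinearMap (F g h) : A × QZ) := by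
    rw [add_def, add_def]
    show ((g * h : A), 0 + 0 + F g h) = ((g * h) * 1, 0 + (F g h - F 1 1) + F (g * h) 1)
    rw [hFg1 (g * h), mul_one]
    refine Prod.ext rfl ?_
    show (0:QZ) + 0 + F g h = 0 + (F g h - F 1 1) + F 1 1
    abel
  have hkey := congrArg r key
  rw [map_add, map_add, hr] at hkey
  simp only [LinearMap.id_apply] at hkey
  rw [hkey]
  abel



lemma grp_conj_pow {H : Type*} [Group H] (x z : H) (n : ℕ) :
    (x⁻¹ * z * x) ^ n = x⁻¹ * z ^ n * x := by
  induction n with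
  | zero => simp
  | succ n ih => rw [pow_succ, ih, pow_succ]; group

lemma conj_fix {H : Type*} [Group H] {x w : H} (hwx : Commute w x) : x⁻¹ * w * x = w := by
  rw [mul_assoc, hwx.eq, ← mul_assoc, inv_mul_cancel, one_mul]

lemma conj_pow_eq {H : Type*} [Group H] {x y z : H} (h : x⁻¹ * y * x = y * z)
    (hzx : Commute z x) : ∀ n : ℕ, (x ^ n)⁻¹ * y * x ^ n = y * z ^ n := by
  intro n
  induction n with
  | zero => simp
  | succ n ih =>
    have e1 : (x ^ (n + 1))⁻¹ * y * x ^ (n + 1) = x⁻¹ * ((x ^ n)⁻¹ * y * x ^ n) * x := by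
      rw [pow_succ]; group
    rw [e1, ih]
    have e2 : x⁻¹ * (y * z ^ n) * x = (x⁻¹ * y * x) * (x⁻¹ * z ^ n * x) := by group
    rw [e2, h, conj_fix (hzx.pow_left n), mul_assoc, ← pow_succ']

lemma conj_pow_ex {H : Type*} [Group H] {x y z w : H} (hy : x⁻¹ * y * x = y * z)
    (hz : x⁻¹ * z * x = z * w) (hwx : Commute w x) (hwz : Commute w z) (n : ℕ) :
    ∃ t : ℕ, (x ^ n)⁻¹ * y * x ^ n = y * z ^ n * w ^ t := by
  induction n with
  | zero => exact ⟨0, by simp⟩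
  | succ n ih =>
    obtain ⟨t, ht⟩ := ih
    refine ⟨n + t, ?_⟩
    have e1 : (x ^ (n + 1))⁻¹ * y * x ^ (n + 1) = x⁻¹ * ((x ^ n)⁻¹ * y * x ^ n) * x := by
      rw [pow_succ]; group
    rw [e1, ht]
    have e2 : x⁻¹ * (y * z ^ n * w ^ t) * x
        = (x⁻¹ * y * x) * (x⁻¹ * z ^ n * x) * (x⁻¹ * w ^ t * x) := by group
    have e3 : x⁻¹ * z ^ n * x = z ^ n * w ^ n := by
      rw [← grp_conj_pow, hz, (hwz.symm.mul_pow n)]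
    rw [e2, hy, e3, conj_fix (hwx.pow_left t), pow_succ', pow_add]
    simp only [mul_assoc]

lemma swap_pow {H : Type*} [Group H] {x y z : H} (hxy : y * x = x * y * z)
    (hzx : Commute z x) (hzy : Commute z y) (m n : ℕ) :
    y ^ m * x ^ n = x ^ n * y ^ m * z ^ (n * m) := by
  have base : ∀ k : ℕ, y * x ^ k = x ^ k * y * z ^ k := by
    intro k
    induction k with
    | zero => simp
    | succ k ih =>
      calc y * x ^ (k + 1) = y * x ^ k * x := by rw [pow_succ, mul_assoc]
        _ = x ^ k * y * z ^ k * x := by rw [ih]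
        _ = x ^ k * y * (x * z ^ k) := by rw [mul_assoc (x ^ k * y), (hzx.pow_left k).eq]
        _ = x ^ k * (y * x) * z ^ k := by simp only [mul_assoc]
        _ = x ^ k * (x * y * z) * z ^ k := by rw [hxy]
        _ = x ^ (k + 1) * y * z ^ (k + 1) := by
            rw [pow_succ x, pow_succ' z]; simp only [mul_assoc]
  induction m with
  | zero => simp
  | succ m ih =>
    calc y ^ (m + 1) * x ^ n = y ^ m * (y * x ^ n) := by rw [pow_succ, mul_assoc]
      _ = y ^ m * (x ^ n * y * z ^ n) := by rw [base n]
      _ = (y ^ m * x ^ n) * y * z ^ n := by simp only [mul_assoc]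
      _ = x ^ n * y ^ m * z ^ (n * m) * y * z ^ n := by rw [ih]
      _ = x ^ n * y ^ m * (y * z ^ (n * m)) * z ^ n := by
          rw [mul_assoc (x ^ n * y ^ m), (hzy.pow_left (n * m)).eq]
      _ = x ^ n * (y ^ m * y) * (z ^ (n * m) * z ^ n) := by simp only [mul_assoc]
      _ = x ^ n * y ^ (m + 1) * z ^ (n * (m + 1)) := by
          rw [← pow_succ, ← pow_add, ← Nat.mul_succ]

/-- The commutator `[g,h] = g⁻¹h⁻¹gh`. -/
def cmt {G : Type*} [Group G] (g h : G) : G := g⁻¹ * h⁻¹ * g * h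

/-- Let `p ≥ 3` be a prime and `G` a group of order `p⁵` generated by `f1,…,f5` with
(i) `f4^p = f5^p = 1` and `f5` central, (ii) `[f2,f1] = f3`, `[f3,f1] = f4`,
`[f4,f1] = [f3,f2] = f5`, `[f4,f2] = [f4,f3] = 1`, and (iii) `⟨f4,f5⟩ ≃ C_p × C_p` and
`G/⟨f4,f5⟩` non-abelian of order `p³` and exponent `p`. Then `B₀(G) ≠ 0`. -/
theorem B0_ne_bot_of_rels (p : ℕ) (hp : p.Prime) (hp3 : 3 ≤ p)
    (G : Type) [Group G] [Finite G] (hcard : Nat.card G = p ^ 5)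
    (f1 f2 f3 f4 f5 : G)
    (hgen : Subgroup.closure {f1, f2, f3, f4, f5} = ⊤)
    (h4p : f4 ^ p = 1) (h5p : f5 ^ p = 1) (h5c : f5 ∈ Subgroup.center G)
    (r1 : cmt f2 f1 = f3) (r2 : cmt f3 f1 = f4) (r3 : cmt f4 f1 = f5)
    (r4 : cmt f3 f2 = f5) (r5 : cmt f4 f2 = 1) (r6 : cmt f4 f3 = 1)
    (hN : Nonempty (↥(Subgroup.closure {f4, f5})
            ≃* Multiplicative (ZMod p) × Multiplicative (ZMod p)))
    [hNnormal : (Subgroup.closure ({f4, f5} : Set G)).Normal]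
    (hQcard : Nat.card (G ⧸ Subgroup.closure ({f4, f5} : Set G)) = p ^ 3)
    (hQnonab : ∃ a b : G ⧸ Subgroup.closure ({f4, f5} : Set G), a * b ≠ b * a)
    (hQexp : Monoid.exponent (G ⧸ Subgroup.closure ({f4, f5} : Set G)) = p) :
    B0 G ≠ ⊥ := by
  classical
  haveI factp : Fact p.Prime := ⟨hp⟩
  have hp1 : 1 < p := hp.one_lt
  haveI fact1p : Fact (1 < p) := ⟨hp1⟩
  set N : Subgroup G := Subgroup.closure ({f4, f5} : Set G) with hNdef
  -- basic consequences of the relations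
  have key_comm : ∀ x y : G, x * y = y * x * cmt x y := by
    intro x y; simp only [cmt]; group
  have g21 : f2 * f1 = f1 * f2 * f3 := by rw [key_comm f2 f1, r1]
  have g31 : f3 * f1 = f1 * f3 * f4 := by rw [key_comm f3 f1, r2]
  have g41 : f4 * f1 = f1 * f4 * f5 := by rw [key_comm f4 f1, r3]
  have g32 : f3 * f2 = f2 * f3 * f5 := by rw [key_comm f3 f2, r4]
  have g42 : f4 * f2 = f2 * f4 := by rw [key_comm f4 f2, r5, mul_one]
  have g43 : f4 * f3 = f3 * f4 := by rw [key_comm f4 f3, r6, mul_one]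
  have hc5 : ∀ x : G, f5 * x = x * f5 := fun x => (Subgroup.mem_center_iff.mp h5c x).symm
  have cm45 : Commute f4 f5 := (hc5 f4).symm
  have cm42 : Commute f4 f2 := g42
  have cm43 : Commute f4 f3 := g43
  have cm5 : ∀ x : G, Commute f5 x := fun x => hc5 x
  -- power helpers
  have hpowval : ∀ x : G, x ^ p = 1 → ∀ n : ℕ, x ^ n = x ^ (n : ZMod p).val := by
    intro x hx n
    conv_lhs => rw [← Nat.div_add_mod n p]
    rw [pow_add, pow_mul, hx, one_pow, one_mul, ZMod.val_natCast]
  have hcastval : ∀ a : ZMod p, ((a.val : ℕ) : ZMod p) = a := fun a => ZMod.natCast_rightInverse a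
  -- structure of N
  have mem4 : f4 ∈ N := Subgroup.subset_closure (by simp)
  have mem5 : f5 ∈ N := Subgroup.subset_closure (by simp)
  have hmulform : ∀ i j i' j' : ZMod p,
      (f4 ^ i.val * f5 ^ j.val) * (f4 ^ i'.val * f5 ^ j'.val)
        = f4 ^ (i + i').val * f5 ^ (j + j').val := by
    intro i j i' j'
    have hc : Commute (f5 ^ j.val) (f4 ^ i'.val) := (cm45.symm).pow_pow _ _
    have e1 : ((i.val + i'.val : ℕ) : ZMod p) = i + i' := by push_cast [hcastval]; ring
    have e2 : ((j.val + j'.val : ℕ) : ZMod p) = j + j' := by push_cast [hcastval]; ring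
    calc (f4 ^ i.val * f5 ^ j.val) * (f4 ^ i'.val * f5 ^ j'.val)
        = f4 ^ i.val * (f5 ^ j.val * f4 ^ i'.val) * f5 ^ j'.val := by simp only [mul_assoc]
      _ = f4 ^ i.val * (f4 ^ i'.val * f5 ^ j.val) * f5 ^ j'.val := by rw [hc.eq]
      _ = f4 ^ (i.val + i'.val) * f5 ^ (j.val + j'.val) := by
          rw [pow_add, pow_add]; simp only [mul_assoc]
      _ = f4 ^ (i + i').val * f5 ^ (j + j').val := by
          rw [hpowval f4 h4p (i.val + i'.val), hpowval f5 h5p (j.val + j'.val), e1, e2]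
  let S : Subgroup G :=
    { carrier := {x | ∃ i j : ZMod p, x = f4 ^ i.val * f5 ^ j.val}
      one_mem' := ⟨0, 0, by simp⟩
      mul_mem' := by
        rintro x y ⟨i, j, rfl⟩ ⟨i', j', rfl⟩
        exact ⟨i + i', j + j', hmulform i j i' j'⟩
      inv_mem' := by
        rintro x ⟨i, j, rfl⟩
        refine ⟨-i, -j, ?_⟩
        rw [inv_eq_iff_mul_eq_one, hmulform i j (-i) (-j)]
        simp }
  have hSle : N ≤ S := by
    rw [hNdef]
    refine (Subgroup.closure_le S).mpr ?_
    intro x hx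
    simp only [Set.mem_insert_iff, Set.mem_singleton_iff] at hx
    rcases hx with rfl | rfl
    · exact ⟨1, 0, by simp [ZMod.val_one]⟩
    · exact ⟨0, 1, by simp [ZMod.val_one]⟩
  have hNel : ∀ n, n ∈ N → ∃ i j : ZMod p, n = f4 ^ i.val * f5 ^ j.val := fun n hn => hSle hn
  have hcardN : Nat.card ↥N = p * p := by
    obtain ⟨e⟩ := hN
    rw [Nat.card_congr e.toEquiv, Nat.card_prod]
    simp [Nat.card_eq_fintype_card, ZMod.card]
  -- the parametrization of N is bijective
  have hΦbij : Function.Bijective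
      (fun ij : ZMod p × ZMod p =>
        (⟨f4 ^ ij.1.val * f5 ^ ij.2.val,
          mul_mem (pow_mem mem4 _) (pow_mem mem5 _)⟩ : ↥N)) := by
    refine (Nat.bijective_iff_surjective_and_card _).mpr ⟨?_, ?_⟩
    · rintro ⟨n, hn⟩
      obtain ⟨i, j, rfl⟩ := hNel n hn
      exact ⟨(i, j), rfl⟩
    · rw [Nat.card_prod, Nat.card_zmod, hcardN]
  have huniq : ∀ i j : ZMod p, f4 ^ i.val * f5 ^ j.val = 1 → i = 0 ∧ j = 0 := by
    intro i j hij
    have h00 : (fun ij : ZMod p × ZMod p =>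
        (⟨f4 ^ ij.1.val * f5 ^ ij.2.val,
          mul_mem (pow_mem mem4 _) (pow_mem mem5 _)⟩ : ↥N)) (i, j)
        = (fun ij : ZMod p × ZMod p =>
        (⟨f4 ^ ij.1.val * f5 ^ ij.2.val,
          mul_mem (pow_mem mem4 _) (pow_mem mem5 _)⟩ : ↥N)) (0, 0) := by
      apply Subtype.ext
      simpa using hij
    have := hΦbij.1 h00
    exact ⟨congrArg Prod.fst this, congrArg Prod.snd this⟩
  have h45eq : ∀ m k m' k' : ℕ, f4 ^ m * f5 ^ k = f4 ^ m' * f5 ^ k' →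
      (m : ZMod p) = (m' : ZMod p) ∧ (k : ZMod p) = (k' : ZMod p) := by
    intro m k m' k' h
    rw [hpowval f4 h4p m, hpowval f5 h5p k, hpowval f4 h4p m', hpowval f5 h5p k'] at h
    have h2 : (fun ij : ZMod p × ZMod p =>
        (⟨f4 ^ ij.1.val * f5 ^ ij.2.val,
          mul_mem (pow_mem mem4 _) (pow_mem mem5 _)⟩ : ↥N)) ((m : ZMod p), (k : ZMod p))
        = (fun ij : ZMod p × ZMod p =>
        (⟨f4 ^ ij.1.val * f5 ^ ij.2.val,
          mul_mem (pow_mem mem4 _) (pow_mem mem5 _)⟩ : ↥N)) ((m' : ZMod p), (k' : ZMod p)) :=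
      Subtype.ext h
    have := hΦbij.1 h2
    exact ⟨congrArg Prod.fst this, congrArg Prod.snd this⟩
  have hf5ord : ∀ m k : ℕ, f5 ^ m = f5 ^ k → (m : ZMod p) = (k : ZMod p) := by
    intro m k h
    exact (h45eq 0 m 0 k (by simpa using h)).2
  -- quotient group Q = G/N
  let π : G →* G ⧸ N := QuotientGroup.mk' N
  have hπsurj : Function.Surjective π := QuotientGroup.mk'_surjective N
  have hπ4 : π f4 = 1 := (QuotientGroup.eq_one_iff f4).mpr mem4
  have hπ5 : π f5 = 1 := (QuotientGroup.eq_one_iff f5).mpr mem5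
  have hxp : ∀ q : G ⧸ N, q ^ p = 1 := by
    intro q; rw [← hQexp]; exact Monoid.pow_exponent_eq_one q
  have hqpowval : ∀ (q : G ⧸ N) (n : ℕ), q ^ n = q ^ (n : ZMod p).val := by
    intro q n
    conv_lhs => rw [← Nat.div_add_mod n p]
    rw [pow_add, pow_mul, hxp, one_pow, one_mul, ZMod.val_natCast]
  set X1 : G ⧸ N := π f1 with hX1
  set X2 : G ⧸ N := π f2 with hX2
  set X3 : G ⧸ N := π f3 with hX3
  have qx21 : X2 * X1 = X1 * X2 * X3 := by
    have := congrArg π g21; simpa only [map_mul] using this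
  have qc31 : Commute X3 X1 := by
    have := congrArg π g31; simp only [map_mul, hπ4] at this
    rw [mul_one] at this; exact this
  have qc32 : Commute X3 X2 := by
    have := congrArg π g32; simp only [map_mul, hπ5] at this
    rw [mul_one] at this; exact this
  have hsw := swap_pow qx21 qc31 qc32
  have hρmul : ∀ v w : T3 p,
      (X1 ^ (v.a).val * X2 ^ (v.b).val * X3 ^ (v.c).val)
        * (X1 ^ (w.a).val * X2 ^ (w.b).val * X3 ^ (w.c).val)
      = X1 ^ ((v * w).a).val * X2 ^ ((v * w).b).val * X3 ^ ((v * w).c).val := by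
    intro v w
    have lcomm : ∀ {a b : G ⧸ N}, Commute a b → ∀ c, a * (b * c) = b * (a * c) := by
      intro a b hab c; rw [← mul_assoc, hab.eq, mul_assoc]
    have swrest : ∀ (m n : ℕ) (t : G ⧸ N),
        X2 ^ m * (X1 ^ n * t) = X1 ^ n * (X2 ^ m * (X3 ^ (n * m) * t)) := by
      intro m n t; rw [← mul_assoc, hsw m n]; simp only [mul_assoc]
    have ea : ((v.a.val + w.a.val : ℕ) : ZMod p) = v.a + w.a := by push_cast [hcastval]; ring
    have eb : ((v.b.val + w.b.val : ℕ) : ZMod p) = v.b + w.b := by push_cast [hcastval]; ring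
    have ec : ((w.a.val * v.b.val + (v.c.val + w.c.val) : ℕ) : ZMod p)
        = v.c + w.c + w.a * v.b := by push_cast [hcastval]; ring
    calc X1 ^ v.a.val * X2 ^ v.b.val * X3 ^ v.c.val
          * (X1 ^ w.a.val * X2 ^ w.b.val * X3 ^ w.c.val)
        = X1 ^ v.a.val * (X2 ^ v.b.val * (X3 ^ v.c.val
            * (X1 ^ w.a.val * (X2 ^ w.b.val * X3 ^ w.c.val)))) := by simp only [mul_assoc]
      _ = X1 ^ v.a.val * (X2 ^ v.b.val * (X1 ^ w.a.val * (X3 ^ v.c.val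
            * (X2 ^ w.b.val * X3 ^ w.c.val)))) := by
          rw [lcomm (qc31.pow_pow v.c.val w.a.val)]
      _ = X1 ^ v.a.val * (X2 ^ v.b.val * (X1 ^ w.a.val * (X2 ^ w.b.val
            * (X3 ^ v.c.val * X3 ^ w.c.val)))) := by
          rw [lcomm (qc32.pow_pow v.c.val w.b.val)]
      _ = X1 ^ v.a.val * (X1 ^ w.a.val * (X2 ^ v.b.val * (X3 ^ (w.a.val * v.b.val)
            * (X2 ^ w.b.val * (X3 ^ v.c.val * X3 ^ w.c.val))))) := by
          rw [swrest v.b.val w.a.val]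
      _ = X1 ^ v.a.val * (X1 ^ w.a.val * (X2 ^ v.b.val * (X2 ^ w.b.val
            * (X3 ^ (w.a.val * v.b.val) * (X3 ^ v.c.val * X3 ^ w.c.val))))) := by
          rw [lcomm (qc32.pow_pow (w.a.val * v.b.val) w.b.val)]
      _ = X1 ^ (v.a.val + w.a.val) * X2 ^ (v.b.val + w.b.val)
            * X3 ^ (w.a.val * v.b.val + (v.c.val + w.c.val)) := by
          rw [pow_add X1, pow_add X2, pow_add X3 (w.a.val * v.b.val) (v.c.val + w.c.val),
            pow_add X3 v.c.val w.c.val]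
          simp only [mul_assoc]
      _ = X1 ^ ((v * w).a).val * X2 ^ ((v * w).b).val * X3 ^ ((v * w).c).val := by
          rw [hqpowval X1 (v.a.val + w.a.val), hqpowval X2 (v.b.val + w.b.val),
            hqpowval X3 (w.a.val * v.b.val + (v.c.val + w.c.val)), ea, eb, ec]
          rfl
  let ρ : T3 p →* G ⧸ N :=
    MonoidHom.mk' (fun v => X1 ^ (v.a).val * X2 ^ (v.b).val * X3 ^ (v.c).val)
      (fun v w => (hρmul v w).symm)
  have hρ1 : ρ ⟨1, 0, 0⟩ = X1 := by
    show X1 ^ (1 : ZMod p).val * X2 ^ (0 : ZMod p).val * X3 ^ (0 : ZMod p).val = X1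
    rw [ZMod.val_one p, ZMod.val_zero]
    simp
  have hρ2 : ρ ⟨0, 1, 0⟩ = X2 := by
    show X1 ^ (0 : ZMod p).val * X2 ^ (1 : ZMod p).val * X3 ^ (0 : ZMod p).val = X2
    rw [ZMod.val_one p, ZMod.val_zero]
    simp
  have hρ3 : ρ ⟨0, 0, 1⟩ = X3 := by
    show X1 ^ (0 : ZMod p).val * X2 ^ (0 : ZMod p).val * X3 ^ (1 : ZMod p).val = X3
    rw [ZMod.val_one p, ZMod.val_zero]
    simp
  have hρsurj : Function.Surjective ρ := by
    have htop : Subgroup.closure (π '' {f1, f2, f3, f4, f5}) = ⊤ := by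
      rw [← MonoidHom.map_closure, hgen]
      exact Subgroup.map_top_of_surjective π hπsurj
    have hsub : Subgroup.closure (π '' {f1, f2, f3, f4, f5}) ≤ ρ.range := by
      refine (Subgroup.closure_le _).mpr ?_
      rintro x ⟨y, hy, rfl⟩
      simp only [Set.mem_insert_iff, Set.mem_singleton_iff] at hy
      rcases hy with rfl | rfl | rfl | rfl | rfl
      · exact ⟨⟨1, 0, 0⟩, hρ1⟩
      · exact ⟨⟨0, 1, 0⟩, hρ2⟩
      · exact ⟨⟨0, 0, 1⟩, hρ3⟩
      · exact ⟨1, by rw [map_one, ← hπ4]⟩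
      · exact ⟨1, by rw [map_one, ← hπ5]⟩
    intro q
    have hq : q ∈ Subgroup.closure (π '' {f1, f2, f3, f4, f5}) := htop ▸ Subgroup.mem_top q
    exact hsub hq
  haveI : Finite (T3 p) := Finite.of_equiv _
    (⟨fun v : ZMod p × ZMod p × ZMod p => (⟨v.1, v.2.1, v.2.2⟩ : T3 p),
      fun x => (x.a, x.b, x.c), fun v => rfl, fun x => rfl⟩ :
      (ZMod p × ZMod p × ZMod p) ≃ T3 p)
  have hcardT : Nat.card (T3 p) = p ^ 3 := by
    rw [Nat.card_congr (⟨fun x : T3 p => (x.a, x.b, x.c),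
      fun v => ⟨v.1, v.2.1, v.2.2⟩, fun x => rfl, fun v => rfl⟩ :
      T3 p ≃ ZMod p × ZMod p × ZMod p)]
    rw [Nat.card_prod, Nat.card_prod, Nat.card_zmod]
    ring
  have hρbij : Function.Bijective ρ :=
    (Nat.bijective_iff_surjective_and_card ρ).mpr ⟨hρsurj, by rw [hcardT, hQcard]⟩
  let E0 : T3 p ≃* G ⧸ N := MulEquiv.ofBijective ρ hρbij
  let θ : G →* T3 p := E0.symm.toMonoidHom.comp π
  have hθρ : ∀ g : G, E0 (θ g) = π g := fun g => E0.apply_symm_apply (π g)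
  have hθ1 : θ f1 = ⟨1, 0, 0⟩ := by
    have h : E0 ⟨1, 0, 0⟩ = π f1 := hρ1
    calc θ f1 = E0.symm (π f1) := rfl
      _ = E0.symm (E0 ⟨1, 0, 0⟩) := by rw [h]
      _ = ⟨1, 0, 0⟩ := E0.symm_apply_apply _
  have hθ2 : θ f2 = ⟨0, 1, 0⟩ := by
    have h : E0 ⟨0, 1, 0⟩ = π f2 := hρ2
    calc θ f2 = E0.symm (π f2) := rfl
      _ = E0.symm (E0 ⟨0, 1, 0⟩) := by rw [h]
      _ = ⟨0, 1, 0⟩ := E0.symm_apply_apply _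
  have hθ3 : θ f3 = ⟨0, 0, 1⟩ := by
    have h : E0 ⟨0, 0, 1⟩ = π f3 := hρ3
    calc θ f3 = E0.symm (π f3) := rfl
      _ = E0.symm (E0 ⟨0, 0, 1⟩) := by rw [h]
      _ = ⟨0, 0, 1⟩ := E0.symm_apply_apply _
  have hθ4 : θ f4 = 1 := by
    calc θ f4 = E0.symm (π f4) := rfl
      _ = E0.symm 1 := by rw [hπ4]
      _ = 1 := map_one _
  have hθ5 : θ f5 = 1 := by
    calc θ f5 = E0.symm (π f5) := rfl
      _ = E0.symm 1 := by rw [hπ5]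
      _ = 1 := map_one _
  have hθmem : ∀ g : G, θ g = 1 → g ∈ N := by
    intro g hg
    have hπg : π g = 1 := by rw [← hθρ g, hg, map_one]
    exact (QuotientGroup.eq_one_iff g).mp hπg
  have hdecomp : ∀ g : G, ∃ n, n ∈ N ∧
      g = f1 ^ ((θ g).a.val) * f2 ^ ((θ g).b.val) * f3 ^ ((θ g).c.val) * n := by
    intro g
    have hθw : θ (f1 ^ ((θ g).a.val) * f2 ^ ((θ g).b.val) * f3 ^ ((θ g).c.val)) = θ g := by
      simp only [map_mul, map_pow, hθ1, hθ2, hθ3, T3.pow_e1, T3.pow_e2, T3.pow_e3, hcastval]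
      ext <;> simp
    refine ⟨(f1 ^ ((θ g).a.val) * f2 ^ ((θ g).b.val) * f3 ^ ((θ g).c.val))⁻¹ * g,
      hθmem _ ?_, by group⟩
    rw [map_mul, map_inv, hθw]
    simp
  -- the 2-cocycle data
  have h2ne : (2 : ZMod p) ≠ 0 := by
    have hnd : ¬ (p ∣ 2) := by
      intro hdvd
      have := Nat.le_of_dvd (by norm_num) hdvd
      omega
    have : ((2 : ℕ) : ZMod p) ≠ 0 := by
      rw [Ne, ZMod.natCast_eq_zero_iff]
      exact hnd
    simpa using this
  have h2unit : (2 : ZMod p) * (2 : ZMod p)⁻¹ = 1 := mul_inv_cancel₀ h2ne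
  set i2 : ZMod p := (2 : ZMod p)⁻¹ with hi2
  set F : G → G → ZMod p := fun g h => omegaT i2 (θ g) (θ h) with hFdef
  have hFco : ∀ g h k : G, F g h + F (g * h) k = F h k + F g (h * k) := by
    intro g h k
    simp only [hFdef, map_mul]
    exact omegaT_cocycle h2unit (θ g) (θ h) (θ k)
  set EE : G → G → ZMod p := fun g h => F g h - F h g with hEEdef
  have hEbil : ∀ g h k : G, g * h = h * g → g * k = k * g → EE g (h * k) = EE g h + EE g k :=
    fun g h k hgh hgk => cocycle_antisym_add hFco hgh hgk
  have hEone : ∀ g h : G, θ h = 1 → EE g h = 0 := by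
    intro g h hh
    simp [hEEdef, hFdef, hh]
  have hEpow : ∀ g h : G, g * h = h * g → ∀ n : ℕ, EE g (h ^ n) = n • EE g h := by
    intro g h hgh n
    have cg : Commute g h := hgh
    induction n with
    | zero => simpa using hEone g 1 (map_one θ)
    | succ n ih =>
      rw [pow_succ, hEbil g (h ^ n) h (cg.pow_right n).eq hgh, ih, succ_nsmul]
  have hEself : ∀ (g : G) (n : ℕ), EE g (g ^ n) = 0 := by
    intro g n
    rw [hEpow g g rfl n]
    simp [hEEdef]
  -- helpers for collection in G
  have gl : ∀ {a b : G}, Commute a b → ∀ c : G, a * (b * c) = b * (a * c) := by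
    intro a b hab c; rw [← mul_assoc, hab.eq, mul_assoc]
  have powmerge : ∀ (x : G) (m n : ℕ) (c : G), x ^ m * (x ^ n * c) = x ^ (m + n) * c := by
    intro x m n c; rw [← mul_assoc, ← pow_add]
  -- conjugation formulas
  have hc41 : f1⁻¹ * f4 * f1 = f4 * f5 := by
    rw [show f1⁻¹ * f4 * f1 = f1⁻¹ * (f4 * f1) from by group, g41]; group
  have hc31 : f1⁻¹ * f3 * f1 = f3 * f4 := by
    rw [show f1⁻¹ * f3 * f1 = f1⁻¹ * (f3 * f1) from by group, g31]; group
  have hc32 : f2⁻¹ * f3 * f2 = f3 * f5 := by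
    rw [show f2⁻¹ * f3 * f2 = f2⁻¹ * (f3 * f2) from by group, g32]; group
  have gc5 : ∀ g : G, g⁻¹ * f5 * g = f5 := fun g => conj_fix (cm5 g)
  have gc4 : ∀ g : G, g⁻¹ * f4 * g = f4 * f5 ^ ((θ g).a.val) := by
    intro g
    obtain ⟨n, hn, hgdec⟩ := hdecomp g
    obtain ⟨i, j, hnij⟩ := hNel n hn
    have hn4 : Commute f4 n := by
      rw [hnij]
      exact ((Commute.refl f4).pow_right i.val).mul_right (cm45.pow_right j.val)
    conv_lhs => rw [hgdec]
    rw [show (f1 ^ (θ g).a.val * f2 ^ (θ g).b.val * f3 ^ (θ g).c.val * n)⁻¹ * f4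
          * (f1 ^ (θ g).a.val * f2 ^ (θ g).b.val * f3 ^ (θ g).c.val * n)
        = n⁻¹ * ((f3 ^ (θ g).c.val)⁻¹ * ((f2 ^ (θ g).b.val)⁻¹
            * ((f1 ^ (θ g).a.val)⁻¹ * f4 * f1 ^ (θ g).a.val)
            * f2 ^ (θ g).b.val) * f3 ^ (θ g).c.val) * n from by group]
    rw [conj_pow_eq hc41 (cm5 f1) (θ g).a.val]
    have e2 : (f2 ^ (θ g).b.val)⁻¹ * (f4 * f5 ^ (θ g).a.val) * f2 ^ (θ g).b.val
        = f4 * f5 ^ (θ g).a.val := by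
      refine conj_fix ?_
      exact Commute.mul_left (cm42.pow_right _) (((cm5 f2).pow_left _).pow_right _)
    have e3 : (f3 ^ (θ g).c.val)⁻¹ * (f4 * f5 ^ (θ g).a.val) * f3 ^ (θ g).c.val
        = f4 * f5 ^ (θ g).a.val := by
      refine conj_fix ?_
      exact Commute.mul_left (cm43.pow_right _) (((cm5 f3).pow_left _).pow_right _)
    have e4 : n⁻¹ * (f4 * f5 ^ (θ g).a.val) * n = f4 * f5 ^ (θ g).a.val := by
      refine conj_fix ?_
      exact Commute.mul_left hn4 ((cm5 n).pow_left _)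
    rw [e2, e3, e4]
  have gc3 : ∀ g : G, ∃ t : ℕ, g⁻¹ * f3 * g = f3 * f4 ^ ((θ g).a.val) * f5 ^ t := by
    intro g
    obtain ⟨n, hn, hgdec⟩ := hdecomp g
    obtain ⟨i, j, hnij⟩ := hNel n hn
    obtain ⟨t, ht⟩ := conj_pow_ex hc31 hc41 (cm5 f1) cm45.symm (θ g).a.val
    refine ⟨(θ g).b.val + t, ?_⟩
    have cm3n : Commute f3 n := by
      rw [hnij]
      exact (cm43.symm.pow_right _).mul_right ((cm5 f3).symm.pow_right _)
    have cm4An : Commute (f4 ^ (θ g).a.val) n := by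
      rw [hnij]
      exact (((Commute.refl f4).pow_pow _ _)).mul_right (cm45.pow_pow _ _)
    conv_lhs => rw [hgdec]
    rw [show (f1 ^ (θ g).a.val * f2 ^ (θ g).b.val * f3 ^ (θ g).c.val * n)⁻¹ * f3
          * (f1 ^ (θ g).a.val * f2 ^ (θ g).b.val * f3 ^ (θ g).c.val * n)
        = n⁻¹ * ((f3 ^ (θ g).c.val)⁻¹ * ((f2 ^ (θ g).b.val)⁻¹
            * ((f1 ^ (θ g).a.val)⁻¹ * f3 * f1 ^ (θ g).a.val)
            * f2 ^ (θ g).b.val) * f3 ^ (θ g).c.val) * n from by group]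
    rw [ht]
    have e2 : (f2 ^ (θ g).b.val)⁻¹ * (f3 * f4 ^ (θ g).a.val * f5 ^ t) * f2 ^ (θ g).b.val
        = f3 * f4 ^ (θ g).a.val * f5 ^ ((θ g).b.val + t) := by
      rw [show (f2 ^ (θ g).b.val)⁻¹ * (f3 * f4 ^ (θ g).a.val * f5 ^ t) * f2 ^ (θ g).b.val
          = ((f2 ^ (θ g).b.val)⁻¹ * f3 * f2 ^ (θ g).b.val)
            * ((f2 ^ (θ g).b.val)⁻¹ * f4 ^ (θ g).a.val * f2 ^ (θ g).b.val)
            * ((f2 ^ (θ g).b.val)⁻¹ * f5 ^ t * f2 ^ (θ g).b.val) from by group]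
      rw [conj_pow_eq hc32 (cm5 f2) (θ g).b.val,
        conj_fix (cm42.pow_pow _ _), conj_fix ((cm5 f2).pow_pow t _)]
      simp only [mul_assoc]
      rw [gl ((cm45.symm).pow_pow (θ g).b.val (θ g).a.val), ← pow_add]
    rw [e2]
    have e3 : (f3 ^ (θ g).c.val)⁻¹ * (f3 * f4 ^ (θ g).a.val * f5 ^ ((θ g).b.val + t))
        * f3 ^ (θ g).c.val = f3 * f4 ^ (θ g).a.val * f5 ^ ((θ g).b.val + t) := by
      refine conj_fix ?_
      exact (((Commute.refl f3).pow_right _).mul_left (cm43.pow_pow _ _)).mul_left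
        ((cm5 f3).pow_pow _ _)
    rw [e3]
    refine conj_fix ?_
    exact (cm3n.mul_left cm4An).mul_left ((cm5 n).pow_left _)
  -- case: both a-components vanish
  have Mzero : ∀ g h : G, (θ g).a = 0 → (θ h).a = 0 → g * h = h * g → F g h = F h g := by
    intro g h hga hha hco
    obtain ⟨n, hn, hgdec⟩ := hdecomp g
    obtain ⟨m, hm, hhdec⟩ := hdecomp h
    obtain ⟨i, j, hnij⟩ := hNel n hn
    obtain ⟨i', j', hmij⟩ := hNel m hm
    rw [hga, ZMod.val_zero, pow_zero, one_mul] at hgdec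
    rw [hha, ZMod.val_zero, pow_zero, one_mul] at hhdec
    have hn2 : Commute n f2 := by
      rw [hnij]; exact (cm42.pow_left _).mul_left ((cm5 f2).pow_left _)
    have hn3 : Commute n f3 := by
      rw [hnij]; exact (cm43.pow_left _).mul_left ((cm5 f3).pow_left _)
    have hm2 : Commute m f2 := by
      rw [hmij]; exact (cm42.pow_left _).mul_left ((cm5 f2).pow_left _)
    have hm3 : Commute m f3 := by
      rw [hmij]; exact (cm43.pow_left _).mul_left ((cm5 f3).pow_left _)
    have hnm : m * n = n * m := by
      rw [hnij, hmij]
      exact ((((Commute.refl f4).pow_pow _ _).mul_right (cm45.pow_pow _ _)).mul_left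
        (((cm45.symm.pow_pow _ _)).mul_right ((Commute.refl f5).pow_pow _ _))).symm.eq
    have sw32 := swap_pow g32 (cm5 f2) (cm5 f3)
    have swrest32 : ∀ (mm nn : ℕ) (t : G),
        f3 ^ mm * (f2 ^ nn * t) = f2 ^ nn * (f3 ^ mm * (f5 ^ (nn * mm) * t)) := by
      intro mm nn t; rw [← mul_assoc, sw32]; simp only [mul_assoc]
    have hprod : ∀ (b c : ℕ) (u : G), Commute u f2 → Commute u f3 → ∀ (b' c' : ℕ) (u' : G),
        (f2 ^ b * f3 ^ c * u) * (f2 ^ b' * f3 ^ c' * u')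
          = f2 ^ (b + b') * (f3 ^ (c + c') * (f5 ^ (b' * c) * (u * u'))) := by
      intro b c u hu2 hu3 b' c' u'
      calc (f2 ^ b * f3 ^ c * u) * (f2 ^ b' * f3 ^ c' * u')
          = f2 ^ b * (f3 ^ c * (u * (f2 ^ b' * (f3 ^ c' * u')))) := by simp only [mul_assoc]
        _ = f2 ^ b * (f3 ^ c * (f2 ^ b' * (u * (f3 ^ c' * u')))) := by
            rw [gl (hu2.pow_right b')]
        _ = f2 ^ b * (f3 ^ c * (f2 ^ b' * (f3 ^ c' * (u * u')))) := by
            rw [gl (hu3.pow_right c')]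
        _ = f2 ^ b * (f2 ^ b' * (f3 ^ c * (f5 ^ (b' * c) * (f3 ^ c' * (u * u'))))) := by
            rw [swrest32 c b']
        _ = f2 ^ b * (f2 ^ b' * (f3 ^ c * (f3 ^ c' * (f5 ^ (b' * c) * (u * u'))))) := by
            rw [gl (((cm5 f3).pow_pow (b' * c) c').symm)]
        _ = f2 ^ (b + b') * (f3 ^ (c + c') * (f5 ^ (b' * c) * (u * u'))) := by
            rw [powmerge f2, powmerge f3]
    rw [hgdec, hhdec] at hco
    rw [hprod _ _ n hn2 hn3 _ _ m, hprod _ _ m hm2 hm3 _ _ n] at hco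
    rw [Nat.add_comm ((θ h).b.val) ((θ g).b.val), Nat.add_comm ((θ h).c.val) ((θ g).c.val),
      hnm] at hco
    have hcan := mul_left_cancel (mul_left_cancel hco)
    have hcan2 := mul_right_cancel hcan
    have hord := hf5ord _ _ hcan2
    push_cast [hcastval] at hord
    have hFgh : F g h = (θ g).c * (θ h).b := by
      simp [hFdef, omegaT, hha]
    have hFhg : F h g = (θ h).c * (θ g).b := by
      simp [hFdef, omegaT, hga]
    rw [hFgh, hFhg]
    linear_combination hord
  -- case: a-component of g nonzero, that of h zero
  have AMcase : ∀ g h : G, (θ g).a ≠ 0 → (θ h).a = 0 → g * h = h * g → EE g h = 0 := by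
    intro g h hga hha hco
    have hθcomm : θ g * θ h = θ h * θ g := by rw [← map_mul, ← map_mul, hco]
    have hhb : (θ h).b = 0 := by
      have hc := congrArg T3.c hθcomm
      simp only [T3.mul_c, hha] at hc
      have h0 : (θ g).a * (θ h).b = 0 := by linear_combination -hc
      exact (mul_eq_zero.mp h0).resolve_left hga
    obtain ⟨m, hm, hhdec⟩ := hdecomp h
    rw [hha, hhb, ZMod.val_zero, pow_zero, pow_zero, one_mul, one_mul] at hhdec
    obtain ⟨i, j, hmij⟩ := hNel m hm
    have hconj : g⁻¹ * h * g = h := by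
      rw [mul_assoc, ← hco, ← mul_assoc, inv_mul_cancel, one_mul]
    obtain ⟨t, hgc3⟩ := gc3 g
    have conjh : g⁻¹ * h * g
        = f3 ^ (θ h).c.val * (f4 ^ ((θ g).a.val * (θ h).c.val + i.val)
            * f5 ^ (t * (θ h).c.val + (θ g).a.val * i.val + j.val)) := by
      conv_lhs => rw [hhdec, hmij]
      rw [show g⁻¹ * (f3 ^ (θ h).c.val * (f4 ^ i.val * f5 ^ j.val)) * g
            = (g⁻¹ * f3 ^ (θ h).c.val * g) * ((g⁻¹ * f4 ^ i.val * g)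
              * (g⁻¹ * f5 ^ j.val * g)) from by group]
      rw [← grp_conj_pow g f3, ← grp_conj_pow g f4, ← grp_conj_pow g f5]
      rw [hgc3, gc4 g, gc5 g]
      have expand1 : (f3 * f4 ^ (θ g).a.val * f5 ^ t) ^ (θ h).c.val
          = f3 ^ (θ h).c.val * (f4 ^ ((θ g).a.val * (θ h).c.val)
              * f5 ^ (t * (θ h).c.val)) := by
        have hx1 : Commute (f3 * f4 ^ (θ g).a.val) (f5 ^ t) :=
          Commute.mul_left ((cm5 f3).symm.pow_right t) (cm45.pow_pow _ t)
        have hx2 : Commute f3 (f4 ^ (θ g).a.val) := cm43.symm.pow_right _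
        rw [hx1.mul_pow, hx2.mul_pow, ← pow_mul, ← pow_mul, mul_assoc]
      have expand2 : (f4 * f5 ^ (θ g).a.val) ^ i.val
          = f4 ^ i.val * f5 ^ ((θ g).a.val * i.val) := by
        rw [(cm45.pow_right _).mul_pow, ← pow_mul]
      rw [expand1, expand2]
      simp only [mul_assoc]
      rw [gl ((cm45.symm).pow_pow (t * (θ h).c.val) i.val), powmerge f4, powmerge f5,
        ← pow_add]
    have heq : f3 ^ (θ h).c.val * (f4 ^ ((θ g).a.val * (θ h).c.val + i.val)
        * f5 ^ (t * (θ h).c.val + (θ g).a.val * i.val + j.val))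
        = f3 ^ (θ h).c.val * (f4 ^ i.val * f5 ^ j.val) := by
      rw [← conjh, hconj]
      conv_lhs => rw [hhdec, hmij]
    have heq2 := mul_left_cancel heq
    have hcast := h45eq _ _ _ _ heq2
    have hC' : (θ h).c = 0 := by
      have h1 := hcast.1
      push_cast [hcastval] at h1
      have h0 : (θ g).a * (θ h).c = 0 := by linear_combination h1
      exact (mul_eq_zero.mp h0).resolve_left hga
    rw [hC', ZMod.val_zero, pow_zero, one_mul] at hhdec
    have conj2 : g⁻¹ * h * g = f4 ^ i.val * f5 ^ ((θ g).a.val * i.val + j.val) := by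
      conv_lhs => rw [hhdec, hmij]
      rw [show g⁻¹ * (f4 ^ i.val * f5 ^ j.val) * g
          = (g⁻¹ * f4 ^ i.val * g) * (g⁻¹ * f5 ^ j.val * g) from by group]
      rw [← grp_conj_pow g f4, ← grp_conj_pow g f5, gc4 g, gc5 g]
      rw [(cm45.pow_right _).mul_pow, ← pow_mul, mul_assoc, ← pow_add]
    have heqq : f4 ^ i.val * f5 ^ ((θ g).a.val * i.val + j.val) = f4 ^ i.val * f5 ^ j.val := by
      rw [← conj2, hconj]
      conv_lhs => rw [hhdec, hmij]
    have hcast2 := (h45eq _ _ _ _ heqq).2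
    have hi0 : i = 0 := by
      push_cast [hcastval] at hcast2
      have h0 : (θ g).a * i = 0 := by linear_combination hcast2
      exact (mul_eq_zero.mp h0).resolve_left hga
    rw [hi0, ZMod.val_zero, pow_zero, one_mul] at hmij
    rw [hhdec, hmij]
    rw [hEpow g f5 (hc5 g).symm j.val, hEone g f5 hθ5, smul_zero]
  -- case: a-component of g nonzero (general h)
  have ANcase : ∀ g h : G, (θ g).a ≠ 0 → g * h = h * g → EE g h = 0 := by
    intro g h hga hco
    set k : ℕ := (((θ g).a)⁻¹ * (θ h).a).val with hk
    have cg : Commute g h := hco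
    have ch1 : g * (h * (g ^ k)⁻¹) = (h * (g ^ k)⁻¹) * g :=
      (cg.mul_right (((Commute.refl g).pow_right k).inv_right)).eq
    have hsplith : h = (h * (g ^ k)⁻¹) * g ^ k := by group
    have e1 : EE g h = EE g (h * (g ^ k)⁻¹) + EE g (g ^ k) := by
      conv_lhs => rw [hsplith]
      exact hEbil g _ (g ^ k) ch1 ((Commute.refl g).pow_right k).eq
    rw [hEself g k, add_zero] at e1
    have hinva : (θ (h * (g ^ k)⁻¹)).a = 0 := by
      rw [map_mul, map_inv, map_pow, T3.mul_a, T3.inv_a, T3.pow_a, hk, hcastval]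
      have hcan : (θ g).a⁻¹ * (θ h).a * (θ g).a = (θ h).a := by
        rw [mul_comm ((θ g).a⁻¹) ((θ h).a), mul_assoc, inv_mul_cancel₀ hga, mul_one]
      rw [hcan]
      exact add_neg_cancel _
    rw [e1]
    exact AMcase g _ hga hinva ch1
  -- the commuting-pairs symmetry
  have hsym : ∀ g h : G, g * h = h * g → F g h = F h g := by
    intro g h hco
    by_cases hga : (θ g).a = 0
    · by_cases hha : (θ h).a = 0
      · exact Mzero g h hga hha hco
      · exact (sub_eq_zero.mp (ANcase h g hha hco.symm)).symm
    · exact sub_eq_zero.mp (ANcase g h hga hco)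
  -- the embedding ι : ZMod p → QZ
  have hpQ : (0 : ℚ) < p := by exact_mod_cast hp.pos
  set ι : ZMod p → QZ := fun k => QuotientAddGroup.mk ((k.val : ℚ) / p) with hιdef
  have hι_add : ∀ x y : ZMod p, ι (x + y) = ι x + ι y := by
    intro x y
    simp only [hιdef]
    rw [← QuotientAddGroup.mk_add]
    rw [QuotientAddGroup.eq_iff_sub_mem]
    rw [AddSubgroup.mem_zmultiples_iff]
    refine ⟨-(((x.val + y.val) / p : ℕ) : ℤ), ?_⟩
    have hval : ((x + y).val : ℚ) = (((x.val + y.val) % p : ℕ) : ℚ) := by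
      exact_mod_cast congrArg (Nat.cast : ℕ → ℚ) (ZMod.val_add x y)
    have hdm : (p : ℚ) * (((x.val + y.val) / p : ℕ) : ℚ) + (((x.val + y.val) % p : ℕ) : ℚ)
        = (x.val : ℚ) + (y.val : ℚ) := by
      exact_mod_cast congrArg (Nat.cast : ℕ → ℚ) (Nat.div_add_mod (x.val + y.val) p)
    rw [zsmul_eq_mul, hval, Int.cast_neg, Int.cast_natCast, mul_one,
      show ((((x.val + y.val) % p : ℕ) : ℚ)) / (p : ℚ)
          - ((x.val : ℚ) / (p : ℚ) + (y.val : ℚ) / (p : ℚ))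
        = ((((x.val + y.val) % p : ℕ) : ℚ) - ((x.val : ℚ) + (y.val : ℚ))) / (p : ℚ)
        from by ring,
      eq_div_iff (ne_of_gt hpQ)]
    linarith [hdm]
  have hι_zero : ι (0 : ZMod p) = 0 := by
    simp [hιdef, ZMod.val_zero]
  have hι_one_ne : ι 1 ≠ 0 := by
    intro hcontra
    simp only [hιdef] at hcontra
    rw [ZMod.val_one p] at hcontra
    have hmem' : ((1 : ℚ) / p) ∈ AddSubgroup.zmultiples (1 : ℚ) :=
      (QuotientAddGroup.eq_zero_iff _).mp (by exact_mod_cast hcontra)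
    rw [AddSubgroup.mem_zmultiples_iff] at hmem'
    obtain ⟨k, hk⟩ := hmem'
    rw [zsmul_eq_mul, mul_one] at hk
    have h1 : (0 : ℚ) < 1 / p := by positivity
    have h2 : (1 : ℚ) / p < 1 := by
      rw [div_lt_one hpQ]; exact_mod_cast hp1
    rw [← hk] at h1 h2
    have hk1 : (0 : ℤ) < k := by exact_mod_cast h1
    have hk2 : k < 1 := by exact_mod_cast h2
    omega
  set f : G → G → QZ := fun g h => ι (F g h) with hfdef
  have hfco : IsGrpCocycle f := by
    intro g h k
    simp only [hfdef]
    rw [← hι_add, ← hι_add, hFco g h k]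
  -- restriction to bicyclic subgroups is a coboundary
  have hrestrict : RestrictsToCoboundaries f := by
    intro A hA
    have hAcomm : ∀ x y : A, x * y = y * x := by
      rcases hA with hcyc | ⟨B, C, hB, hC, ⟨e⟩⟩
      · intro x y
        obtain ⟨g0, hg0⟩ := hcyc.exists_generator
        obtain ⟨mx, hmx⟩ := Subgroup.mem_zpowers_iff.mp (hg0 x)
        obtain ⟨my, hmy⟩ := Subgroup.mem_zpowers_iff.mp (hg0 y)
        rw [← hmx, ← hmy, zpow_mul_comm]
      · intro x y
        apply e.injective
        rw [map_mul, map_mul]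
        refine Prod.ext ?_ ?_
        · obtain ⟨gB, hgB⟩ := hB.exists_generator
          obtain ⟨mx, hmx⟩ := Subgroup.mem_zpowers_iff.mp (hgB (e x).1)
          obtain ⟨my, hmy⟩ := Subgroup.mem_zpowers_iff.mp (hgB (e y).1)
          show (e x).1 * (e y).1 = (e y).1 * (e x).1
          rw [← hmx, ← hmy, zpow_mul_comm]
        · obtain ⟨gC, hgC⟩ := hC.exists_generator
          obtain ⟨mx, hmx⟩ := Subgroup.mem_zpowers_iff.mp (hgC (e x).2)
          obtain ⟨my, hmy⟩ := Subgroup.mem_zpowers_iff.mp (hgC (e y).2)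
          show (e x).2 * (e y).2 = (e y).2 * (e x).2
          rw [← hmx, ← hmy, zpow_mul_comm]
    refine symm_cocycle_coboundary hAcomm (fun a b : A => f (a : G) (b : G)) ?_ ?_
    · intro a b k
      exact hfco (a : G) (b : G) (k : G)
    · intro a b
      have hcoe : (a : G) * (b : G) = (b : G) * (a : G) := by
        have h' := congrArg (Subtype.val) (hAcomm a b)
        simpa using h'
      simp only [hfdef]
      exact congrArg ι (hsym _ _ hcoe)
  -- the class of f in H²
  intro hbot
  have hmem : (QuotientAddGroup.mk (⟨f, hfco⟩ : cocycles2 G) : H2 G) ∈ B0 G :=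
    ⟨⟨f, hfco⟩, rfl, hrestrict⟩
  rw [hbot] at hmem
  have hzero : (QuotientAddGroup.mk (⟨f, hfco⟩ : cocycles2 G) : H2 G) = 0 :=
    AddSubgroup.mem_bot.mp hmem
  have hcob : (⟨f, hfco⟩ : cocycles2 G) ∈ coboundaries2 G :=
    (QuotientAddGroup.eq_zero_iff _).mp hzero
  obtain ⟨c, hc⟩ : ∃ c : G → QZ, ∀ g h : G, f g h = c g + c h - c (g * h) := hcob
  -- value computations
  have oval : ∀ g h : G, F g h = omegaT i2 (θ g) (θ h) := fun g h => rfl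
  have hv1 : f f3⁻¹ f2⁻¹ = ι 1 := by
    simp only [hfdef]
    congr 1
    rw [oval, map_inv, map_inv, hθ3, hθ2]
    simp [omegaT]
  have hvzero : ∀ g h : G, omegaT i2 (θ g) (θ h) = 0 → f g h = 0 := by
    intro g h h0
    simp only [hfdef]
    have h0' : F g h = 0 := h0
    rw [h0', hι_zero]
  have hv2 : f (f3⁻¹ * f2⁻¹) f3 = 0 := by
    refine hvzero _ _ ?_
    rw [map_mul, map_inv, map_inv, hθ3, hθ2]
    simp [omegaT]
  have hv3 : f (f3⁻¹ * f2⁻¹ * f3) f2 = 0 := by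
    refine hvzero _ _ ?_
    rw [map_mul, map_mul, map_inv, map_inv, hθ3, hθ2]
    simp [omegaT]
  have hP4 : f3⁻¹ * f2⁻¹ * f3 * f2 = f5 := r4
  have hv4 : f (f3⁻¹ * f2⁻¹ * f3 * f2) f1⁻¹ = 0 := by
    refine hvzero _ _ ?_
    rw [hP4, hθ5]
    simp
  have hv5 : f (f3⁻¹ * f2⁻¹ * f3 * f2 * f1⁻¹) f4⁻¹ = 0 := by
    refine hvzero _ _ ?_
    rw [map_inv, hθ4]
    simp
  have hv6 : f (f3⁻¹ * f2⁻¹ * f3 * f2 * f1⁻¹ * f4⁻¹) f1 = 0 := by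
    refine hvzero _ _ ?_
    rw [show f3⁻¹ * f2⁻¹ * f3 * f2 * f1⁻¹ * f4⁻¹ = f5 * f1⁻¹ * f4⁻¹ from by rw [hP4],
      map_mul, map_mul, map_inv, map_inv, hθ5, hθ4, hθ1]
    simp [omegaT]
  have hv7 : f (f3⁻¹ * f2⁻¹ * f3 * f2 * f1⁻¹ * f4⁻¹ * f1) f4 = 0 := by
    refine hvzero _ _ ?_
    rw [hθ4]
    simp
  have hv11 : f 1 1 = 0 := by
    refine hvzero _ _ ?_
    rw [map_one]
    simp
  have hvi3 : f f3 f3⁻¹ = 0 := by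
    refine hvzero _ _ ?_
    rw [map_inv, hθ3]
    simp [omegaT]
  have hvi2 : f f2 f2⁻¹ = 0 := by
    refine hvzero _ _ ?_
    rw [map_inv, hθ2]
    simp [omegaT]
  have hvi1 : f f1 f1⁻¹ = 0 := by
    refine hvzero _ _ ?_
    rw [map_inv, hθ1]
    simp [omegaT]
  have hvi4 : f f4 f4⁻¹ = 0 := by
    refine hvzero _ _ ?_
    rw [map_inv, hθ4]
    simp
  -- telescoping
  have hC1 : c 1 = 0 := by
    have t11 := hc 1 1
    rw [mul_one, hv11] at t11
    have := t11.symm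
    rw [add_sub_cancel_right] at this
    exact this
  have pair : ∀ x : G, f x x⁻¹ = 0 → c x + c x⁻¹ = 0 := by
    intro x hx
    have t := hc x x⁻¹
    rw [mul_inv_cancel, hx, hC1] at t
    have := t.symm
    rw [sub_zero] at this
    exact this
  have hp3' := pair f3 hvi3
  have hp2' := pair f2 hvi2
  have hp1' := pair f1 hvi1
  have hp4' := pair f4 hvi4
  have hword : f3⁻¹ * f2⁻¹ * f3 * f2 * f1⁻¹ * f4⁻¹ * f1 * f4 = 1 := by
    have h2' : f4⁻¹ * f1⁻¹ * f4 * f1 = f5 := r3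
    rw [show f3⁻¹ * f2⁻¹ * f3 * f2 * f1⁻¹ * f4⁻¹ * f1 * f4
        = (f3⁻¹ * f2⁻¹ * f3 * f2) * (f4⁻¹ * f1⁻¹ * f4 * f1)⁻¹ from by group, hP4, h2',
      mul_inv_cancel]
  have t1 := hc f3⁻¹ f2⁻¹
  rw [hv1] at t1
  have A3 : c (f3⁻¹ * f2⁻¹ * f3) = c (f3⁻¹ * f2⁻¹) + c f3 := by
    have t := hc (f3⁻¹ * f2⁻¹) f3
    rw [hv2] at t
    exact (sub_eq_zero.mp t.symm).symm
  have A4 : c (f3⁻¹ * f2⁻¹ * f3 * f2) = c (f3⁻¹ * f2⁻¹ * f3) + c f2 := by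
    have t := hc (f3⁻¹ * f2⁻¹ * f3) f2
    rw [hv3] at t
    exact (sub_eq_zero.mp t.symm).symm
  have A5 : c (f3⁻¹ * f2⁻¹ * f3 * f2 * f1⁻¹) = c (f3⁻¹ * f2⁻¹ * f3 * f2) + c f1⁻¹ := by
    have t := hc (f3⁻¹ * f2⁻¹ * f3 * f2) f1⁻¹
    rw [hv4] at t
    exact (sub_eq_zero.mp t.symm).symm
  have A6 : c (f3⁻¹ * f2⁻¹ * f3 * f2 * f1⁻¹ * f4⁻¹)
      = c (f3⁻¹ * f2⁻¹ * f3 * f2 * f1⁻¹) + c f4⁻¹ := by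
    have t := hc (f3⁻¹ * f2⁻¹ * f3 * f2 * f1⁻¹) f4⁻¹
    rw [hv5] at t
    exact (sub_eq_zero.mp t.symm).symm
  have A7 : c (f3⁻¹ * f2⁻¹ * f3 * f2 * f1⁻¹ * f4⁻¹ * f1)
      = c (f3⁻¹ * f2⁻¹ * f3 * f2 * f1⁻¹ * f4⁻¹) + c f1 := by
    have t := hc (f3⁻¹ * f2⁻¹ * f3 * f2 * f1⁻¹ * f4⁻¹) f1
    rw [hv6] at t
    exact (sub_eq_zero.mp t.symm).symm
  have A8 : c 1 = c (f3⁻¹ * f2⁻¹ * f3 * f2 * f1⁻¹ * f4⁻¹ * f1) + c f4 := by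
    have t := hc (f3⁻¹ * f2⁻¹ * f3 * f2 * f1⁻¹ * f4⁻¹ * f1) f4
    rw [hv7, hword] at t
    exact (sub_eq_zero.mp t.symm).symm
  have hsum1 : c 1 = c (f3⁻¹ * f2⁻¹)
      + (c f3 + c f2 + c f1⁻¹ + c f4⁻¹ + c f1 + c f4) := by
    rw [A8, A7, A6, A5, A4, A3]; abel
  have hP2eq : c (f3⁻¹ * f2⁻¹)
      = c 1 - (c f3 + c f2 + c f1⁻¹ + c f4⁻¹ + c f1 + c f4) := by
    rw [eq_sub_iff_add_eq]; exact hsum1.symm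
  have hfinal : ι 1 = 0 := by
    rw [t1, hP2eq, hC1]
    have hrearr : c f3⁻¹ + c f2⁻¹ - (0 - (c f3 + c f2 + c f1⁻¹ + c f4⁻¹ + c f1 + c f4))
        = (c f3 + c f3⁻¹) + (c f2 + c f2⁻¹) + (c f1 + c f1⁻¹) + (c f4 + c f4⁻¹) := by
      abel
    rw [hrearr, hp3', hp2', hp1', hp4']
    simp
  exact hι_one_ne hfinal
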